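/- Let c > 1, α ∈ (1,2), let θ be an admissible function with respect to c and α, let φ₁ be the measure on (0,∞) with φ₁((r,∞)) = r^{−α} θ(log r) for all r > 0, and let γ(x) := e^{(α−1)x} ∫_{e^x}^∞ y^{−α} θ(log y) dy. If f, f′, f″ ∈ C₀(ℝ) ∩ L¹(ℝ), then for every x ∈ ℝ the generator form of the semi-fractional derivative equals both Caputo forms: ∫₀^∞ (f(x−y) − f(x) + y f′(x)) dφ₁(y) = ∫₀^∞ (f′(x) − f′(x−y)) y^{−α} θ(log y) dy = ∫₀^∞ f″(x−y) y^{1−α} γ(log y) dy, and all three integrals converge absolutely. -/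

import Mathlib

open MeasureTheory Real Filter Set
open scoped ENNReal NNReal

noncomputable section

private lemma c0_bounded {f : ℝ → ℝ} (hf : Continuous f)
    (h0 : Tendsto f (cocompact ℝ) (nhds 0)) : ∃ B : ℝ, 0 ≤ B ∧ ∀ x, |f x| ≤ B := by
  have h1 : ∀ᶠ x in cocompact ℝ, dist (f x) 0 < 1 :=
    Metric.tendsto_nhds.mp h0 1 one_pos
  obtain ⟨K, hK, hKsub⟩ := hasBasis_cocompact.eventually_iff.mp h1
  have hbdd : BddAbove ((fun x => |f x|) '' K) :=
    (hK.image (hf.abs)).bddAbove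
  obtain ⟨B₀, hB₀⟩ := hbdd
  refine ⟨max B₀ 1, le_trans zero_le_one (le_max_right _ _), fun x => ?_⟩
  by_cases hx : x ∈ K
  · exact le_trans (hB₀ (Set.mem_image_of_mem _ hx)) (le_max_left _ _)
  · have := hKsub hx
    rw [Real.dist_eq, sub_zero] at this
    exact le_trans this.le (le_max_right _ _)

private lemma lswap (μ : Measure ℝ) [SFinite μ] (H : ℝ → ℝ≥0∞) (hH : Measurable H) :
    ∫⁻ y, (∫⁻ t in Set.Ioo 0 y, H t) ∂μ
      = ∫⁻ t in Set.Ioi (0:ℝ), H t * μ (Set.Ioi t) := by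
  have hS : MeasurableSet {p : ℝ × ℝ | 0 < p.2 ∧ p.2 < p.1} :=
    (measurableSet_lt measurable_const measurable_snd).inter
      (measurableSet_lt measurable_snd measurable_fst)
  have hmeas : Measurable fun p : ℝ × ℝ => Set.indicator {p : ℝ × ℝ | 0 < p.2 ∧ p.2 < p.1}
      (fun q => H q.2) p := (hH.comp measurable_snd).indicator hS
  have step1 : ∀ y : ℝ, (∫⁻ t in Set.Ioo 0 y, H t)
      = ∫⁻ t, Set.indicator {p : ℝ × ℝ | 0 < p.2 ∧ p.2 < p.1} (fun q => H q.2) (y, t) := by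
    intro y
    rw [← lintegral_indicator measurableSet_Ioo]
    apply lintegral_congr
    intro t
    by_cases ht : t ∈ Set.Ioo 0 y
    · rw [Set.indicator_of_mem ht, Set.indicator_of_mem (show ((y,t) : ℝ × ℝ) ∈ {p : ℝ × ℝ | 0 < p.2 ∧ p.2 < p.1} from ⟨ht.1, ht.2⟩)]
    · rw [Set.indicator_of_notMem ht, Set.indicator_of_notMem
        (show ((y,t) : ℝ × ℝ) ∉ {p : ℝ × ℝ | 0 < p.2 ∧ p.2 < p.1} from fun hc => ht ⟨hc.1, hc.2⟩)]
  calc ∫⁻ y, (∫⁻ t in Set.Ioo 0 y, H t) ∂μ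
      = ∫⁻ y, (∫⁻ t, Set.indicator {p : ℝ × ℝ | 0 < p.2 ∧ p.2 < p.1}
          (fun q => H q.2) (y, t)) ∂μ := by
        congr 1
        funext y
        exact step1 y
    _ = ∫⁻ t, (∫⁻ y, Set.indicator {p : ℝ × ℝ | 0 < p.2 ∧ p.2 < p.1}
          (fun q => H q.2) (y, t) ∂μ) := lintegral_lintegral_swap hmeas.aemeasurable
    _ = ∫⁻ t, Set.indicator (Set.Ioi 0) (fun t => H t * μ (Set.Ioi t)) t ∂volume := by
        apply lintegral_congr
        intro t
        by_cases ht : (0:ℝ) < t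
        · have heq : ∀ y : ℝ, Set.indicator {p : ℝ × ℝ | 0 < p.2 ∧ p.2 < p.1}
              (fun q => H q.2) (y, t) = Set.indicator (Set.Ioi t) (fun _ => H t) y := by
            intro y
            by_cases hy : t < y
            · rw [Set.indicator_of_mem (show ((y,t) : ℝ × ℝ) ∈ {p : ℝ × ℝ | 0 < p.2 ∧ p.2 < p.1} from ⟨ht, hy⟩),
                Set.indicator_of_mem (Set.mem_Ioi.mpr hy)]
            · rw [Set.indicator_of_notMem (show ((y,t) : ℝ × ℝ) ∉ {p : ℝ × ℝ | 0 < p.2 ∧ p.2 < p.1} from fun hc => hy hc.2),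
                Set.indicator_of_notMem (fun hc => hy (Set.mem_Ioi.mp hc))]
          simp_rw [heq]
          rw [lintegral_indicator measurableSet_Ioi, setLIntegral_const,
            Set.indicator_of_mem (Set.mem_Ioi.mpr ht)]
        · have heq : ∀ y : ℝ, Set.indicator {p : ℝ × ℝ | 0 < p.2 ∧ p.2 < p.1}
              (fun q => H q.2) (y, t) = 0 := fun y =>
            Set.indicator_of_notMem (fun hc => ht hc.1) _
          simp_rw [heq]
          rw [lintegral_zero, Set.indicator_of_notMem (fun hc => ht (Set.mem_Ioi.mp hc))]
    _ = ∫⁻ t in Set.Ioi (0:ℝ), H t * μ (Set.Ioi t) := by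
        rw [lintegral_indicator measurableSet_Ioi]

private lemma theta_bdd {c α : ℝ} (hc : 1 < c) (hα0 : 0 < α) {θ : ℝ → ℝ}
    (hθpos : ∀ x, 0 < θ x) (hper : Function.Periodic θ (Real.log (c ^ (1 / α))))
    (hgrow : ∀ y δ : ℝ, 0 ≤ δ → θ (y + δ) ≤ Real.exp (α * δ) * θ y) :
    ∃ M : ℝ, 0 < M ∧ ∀ t, θ t ≤ M := by
  set p := Real.log (c ^ (1 / α)) with hp_def
  have hp : 0 < p := by
    apply Real.log_pos
    rw [show (1:ℝ) < c ^ (1/α) ↔ _ from Real.one_lt_rpow_iff_of_pos (lt_trans one_pos hc)]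
    exact Or.inl ⟨hc, by positivity⟩
  refine ⟨Real.exp (α * p) * θ 0, mul_pos (Real.exp_pos _) (hθpos 0), fun t => ?_⟩
  have h1 : θ (t - ⌊t / p⌋ * p) = θ t := hper.sub_int_mul_eq ⌊t / p⌋
  have h2 : 0 ≤ t - ⌊t / p⌋ * p := Int.sub_floor_div_mul_nonneg t hp
  have h3 : t - ⌊t / p⌋ * p < p := Int.sub_floor_div_mul_lt t hp
  calc θ t = θ (0 + (t - ⌊t / p⌋ * p)) := by rw [zero_add, h1]
    _ ≤ Real.exp (α * (t - ⌊t / p⌋ * p)) * θ 0 := hgrow 0 _ h2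
    _ ≤ Real.exp (α * p) * θ 0 := by
        apply mul_le_mul_of_nonneg_right _ (hθpos 0).le
        exact Real.exp_le_exp.mpr (by nlinarith)

private lemma bswap (μ : Measure ℝ) [SFinite μ] (h : ℝ → ℝ) (hh : Continuous h)
    (hfin : (∫⁻ t in Set.Ioi (0:ℝ), ENNReal.ofReal |h t| * μ (Set.Ioi t)) ≠ ∞)
    (hμfin : ∀ t : ℝ, 0 < t → μ (Set.Ioi t) ≠ ∞) :
    Integrable (fun y => ∫ t in Set.Ioo 0 y, h t) μ ∧
    ∫ y, (∫ t in Set.Ioo 0 y, h t) ∂μ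
      = ∫ t in Set.Ioi (0:ℝ), h t * (μ (Set.Ioi t)).toReal := by
  have key : ∀ u : ℝ → ℝ, Continuous u → (∀ t, 0 ≤ u t) → (∀ t, u t ≤ |h t|) →
      Integrable (fun y => ∫ t in Set.Ioo 0 y, u t) μ ∧
      (∫ y, (∫ t in Set.Ioo 0 y, u t) ∂μ
        = (∫⁻ t in Set.Ioi (0:ℝ), ENNReal.ofReal (u t) * μ (Set.Ioi t)).toReal) ∧
      (∫⁻ t in Set.Ioi (0:ℝ), ENNReal.ofReal (u t) * μ (Set.Ioi t)) ≠ ∞ := by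
    intro u hu hupos hule
    have hu_int : ∀ y : ℝ, IntegrableOn u (Set.Ioo 0 y) volume :=
      fun y => (hu.integrableOn_Icc).mono_set Set.Ioo_subset_Icc_self
    have contA : Continuous (fun y => ∫ t in Set.Ioo 0 y, u t) := by
      have heq : (fun y => ∫ t in Set.Ioo 0 y, u t)
          = fun y => ∫ t in (0:ℝ)..(max 0 y), u t := by
        funext y
        rcases le_or_gt y 0 with hy | hy
        · rw [max_eq_left hy, intervalIntegral.integral_same,
            Set.Ioo_eq_empty (by simpa using hy)]
          simp
        · rw [max_eq_right hy.le, intervalIntegral.integral_of_le hy.le,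
            integral_Ioc_eq_integral_Ioo]
      rw [heq]
      exact (intervalIntegral.continuous_primitive
        (fun a b => hu.intervalIntegrable a b) 0).comp (continuous_const.max continuous_id)
    have pointwise : ∀ y : ℝ, ENNReal.ofReal (∫ t in Set.Ioo 0 y, u t)
        = ∫⁻ t in Set.Ioo 0 y, ENNReal.ofReal (u t) := fun y =>
      ofReal_integral_eq_lintegral_ofReal (hu_int y) (ae_of_all _ hupos)
    have hswap := lswap μ (fun t => ENNReal.ofReal (u t))
      (ENNReal.measurable_ofReal.comp hu.measurable)
    have Rfin : (∫⁻ t in Set.Ioi (0:ℝ), ENNReal.ofReal (u t) * μ (Set.Ioi t)) ≠ ∞ := by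
      refine ne_top_of_le_ne_top hfin (lintegral_mono fun t => ?_)
      exact mul_le_mul_left (ENNReal.ofReal_le_ofReal (hule t)) _
    have hnonnegA : ∀ y : ℝ, 0 ≤ ∫ t in Set.Ioo 0 y, u t :=
      fun y => setIntegral_nonneg measurableSet_Ioo (fun t _ => hupos t)
    have hintA : Integrable (fun y => ∫ t in Set.Ioo 0 y, u t) μ := by
      refine ⟨contA.aestronglyMeasurable, ?_⟩
      rw [hasFiniteIntegral_iff_ofReal (ae_of_all _ hnonnegA)]
      calc (∫⁻ y, ENNReal.ofReal (∫ t in Set.Ioo 0 y, u t) ∂μ)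
          = ∫⁻ y, (∫⁻ t in Set.Ioo 0 y, ENNReal.ofReal (u t)) ∂μ := by
            exact lintegral_congr fun y => pointwise y
        _ = ∫⁻ t in Set.Ioi (0:ℝ), ENNReal.ofReal (u t) * μ (Set.Ioi t) := hswap
        _ < ∞ := Rfin.lt_top
    refine ⟨hintA, ?_, Rfin⟩
    rw [integral_eq_lintegral_of_nonneg_ae (ae_of_all _ hnonnegA) contA.aestronglyMeasurable]
    congr 1
    calc (∫⁻ y, ENNReal.ofReal (∫ t in Set.Ioo 0 y, u t) ∂μ)
        = ∫⁻ y, (∫⁻ t in Set.Ioo 0 y, ENNReal.ofReal (u t)) ∂μ := by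
          exact lintegral_congr fun y => pointwise y
      _ = ∫⁻ t in Set.Ioi (0:ℝ), ENNReal.ofReal (u t) * μ (Set.Ioi t) := hswap
  -- positive and negative parts
  set hp : ℝ → ℝ := fun t => max (h t) 0 with hp_def
  set hm : ℝ → ℝ := fun t => max (-h t) 0 with hm_def
  have hp_cont : Continuous hp := hh.max continuous_const
  have hm_cont : Continuous hm := hh.neg.max continuous_const
  have hp_nonneg : ∀ t, 0 ≤ hp t := fun t => le_max_right _ _
  have hm_nonneg : ∀ t, 0 ≤ hm t := fun t => le_max_right _ _
  have hp_le : ∀ t, hp t ≤ |h t| := fun t => max_le (le_abs_self _) (abs_nonneg _)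
  have hm_le : ∀ t, hm t ≤ |h t| := fun t => max_le (neg_le_abs _) (abs_nonneg _)
  have hsub : ∀ t, hp t - hm t = h t := fun t => max_zero_sub_max_neg_zero_eq_self (h t)
  obtain ⟨hPint, hPval, hPfin⟩ := key hp hp_cont hp_nonneg hp_le
  obtain ⟨hMint, hMval, hMfin⟩ := key hm hm_cont hm_nonneg hm_le
  have hAeq : ∀ y : ℝ, (∫ t in Set.Ioo 0 y, h t)
      = (∫ t in Set.Ioo 0 y, hp t) - (∫ t in Set.Ioo 0 y, hm t) := by
    intro y
    rw [← integral_sub ((hp_cont.integrableOn_Icc).mono_set Set.Ioo_subset_Icc_self)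
      ((hm_cont.integrableOn_Icc).mono_set Set.Ioo_subset_Icc_self)]
    exact setIntegral_congr_fun measurableSet_Ioo (fun t _ => (hsub t).symm)
  constructor
  · exact (hPint.sub hMint).congr (ae_of_all _ fun y => (hAeq y).symm)
  · -- measurability of the weight
    have hw_meas : Measurable (fun t => (μ (Set.Ioi t)).toReal) := by
      have : Antitone (fun t : ℝ => μ (Set.Ioi t)) :=
        fun a b hab => measure_mono (Set.Ioi_subset_Ioi hab)
      exact this.measurable.ennreal_toReal
    have hw_nonneg : ∀ t : ℝ, 0 ≤ (μ (Set.Ioi t)).toReal := fun t => ENNReal.toReal_nonneg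
    -- each part integrable against the weight on Ioi 0
    have part : ∀ u : ℝ → ℝ, Continuous u → (∀ t, 0 ≤ u t) →
        ((∫⁻ t in Set.Ioi (0:ℝ), ENNReal.ofReal (u t) * μ (Set.Ioi t)) ≠ ∞) →
        IntegrableOn (fun t => u t * (μ (Set.Ioi t)).toReal) (Set.Ioi 0) volume ∧
        (∫ t in Set.Ioi (0:ℝ), u t * (μ (Set.Ioi t)).toReal)
          = (∫⁻ t in Set.Ioi (0:ℝ), ENNReal.ofReal (u t) * μ (Set.Ioi t)).toReal := by
      intro u hu hupos hufin
      have hmeas : AEStronglyMeasurable (fun t => u t * (μ (Set.Ioi t)).toReal)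
          (volume.restrict (Set.Ioi 0)) :=
        (hu.measurable.mul hw_meas).aestronglyMeasurable
      have hcongr : (∫⁻ t in Set.Ioi (0:ℝ), ENNReal.ofReal (u t * (μ (Set.Ioi t)).toReal))
          = ∫⁻ t in Set.Ioi (0:ℝ), ENNReal.ofReal (u t) * μ (Set.Ioi t) := by
        apply setLIntegral_congr_fun measurableSet_Ioi
        intro t ht
        beta_reduce
        rw [ENNReal.ofReal_mul (hupos t), ENNReal.ofReal_toReal (hμfin t ht)]
      have hint : IntegrableOn (fun t => u t * (μ (Set.Ioi t)).toReal) (Set.Ioi 0) volume := by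
        refine ⟨hmeas, ?_⟩
        rw [hasFiniteIntegral_iff_ofReal (ae_of_all _ fun t => mul_nonneg (hupos t) (hw_nonneg t))]
        rw [hcongr]
        exact hufin.lt_top
      refine ⟨hint, ?_⟩
      rw [integral_eq_lintegral_of_nonneg_ae
        (ae_of_all _ fun t => mul_nonneg (hupos t) (hw_nonneg t)) hmeas, hcongr]
    obtain ⟨hPint2, hPval2⟩ := part hp hp_cont hp_nonneg hPfin
    obtain ⟨hMint2, hMval2⟩ := part hm hm_cont hm_nonneg hMfin
    calc ∫ y, (∫ t in Set.Ioo 0 y, h t) ∂μ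
        = ∫ y, ((∫ t in Set.Ioo 0 y, hp t) - (∫ t in Set.Ioo 0 y, hm t)) ∂μ :=
          integral_congr_ae (ae_of_all _ hAeq)
      _ = (∫ y, (∫ t in Set.Ioo 0 y, hp t) ∂μ) - ∫ y, (∫ t in Set.Ioo 0 y, hm t) ∂μ :=
          integral_sub hPint hMint
      _ = (∫⁻ t in Set.Ioi (0:ℝ), ENNReal.ofReal (hp t) * μ (Set.Ioi t)).toReal
          - (∫⁻ t in Set.Ioi (0:ℝ), ENNReal.ofReal (hm t) * μ (Set.Ioi t)).toReal := by
          rw [hPval, hMval]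
      _ = (∫ t in Set.Ioi (0:ℝ), hp t * (μ (Set.Ioi t)).toReal)
          - ∫ t in Set.Ioi (0:ℝ), hm t * (μ (Set.Ioi t)).toReal := by
          rw [hPval2, hMval2]
      _ = ∫ t in Set.Ioi (0:ℝ), h t * (μ (Set.Ioi t)).toReal := by
          rw [← integral_sub hPint2 hMint2]
          apply setIntegral_congr_fun measurableSet_Ioi
          intro t _
          simp only
          rw [← sub_mul, hsub]

def IsAdmissible (c α : ℝ) (θ : ℝ → ℝ) : Prop :=
  (∀ x, 0 < θ x) ∧
  Function.Periodic θ (Real.log (c ^ (1 / α))) ∧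
  ∀ y δ : ℝ, 0 ≤ δ → θ (y + δ) ≤ Real.exp (α * δ) * θ y

/-- `f ∈ C₀(ℝ) ∩ L¹(ℝ)`: continuous, vanishing at `±∞`, and Lebesgue integrable. -/
def MemC0L1 (f : ℝ → ℝ) : Prop :=
  Continuous f ∧ Tendsto f (cocompact ℝ) (nhds 0) ∧ Integrable f

theorem stmt2 (c α : ℝ) (hc : 1 < c) (hα : α ∈ Set.Ioo (1 : ℝ) 2)
    (θ : ℝ → ℝ) (hθ : IsAdmissible c α θ)
    (φ₁ : Measure ℝ)
    (hφ : ∀ r : ℝ, 0 < r → φ₁ (Set.Ioi r) = ENNReal.ofReal (r ^ (-α) * θ (Real.log r)))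
    (hφ0 : φ₁ (Set.Iic 0) = 0)
    (γ : ℝ → ℝ)
    (hγ : ∀ x : ℝ,
      γ x = Real.exp ((α - 1) * x) * ∫ y in Set.Ioi (Real.exp x), y ^ (-α) * θ (Real.log y))
    (f f' f'' : ℝ → ℝ)
    (hder1 : ∀ x, HasDerivAt f (f' x) x) (hder2 : ∀ x, HasDerivAt f' (f'' x) x)
    (hf : MemC0L1 f) (hf' : MemC0L1 f') (hf'' : MemC0L1 f'') (x : ℝ) :
    Integrable (fun y => f (x - y) - f x + y * f' x) φ₁ ∧
    IntegrableOn (fun y => (f' x - f' (x - y)) * (y ^ (-α) * θ (Real.log y))) (Set.Ioi 0) volume ∧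
    IntegrableOn (fun y => f'' (x - y) * (y ^ (1 - α) * γ (Real.log y))) (Set.Ioi 0) volume ∧
    (∫ y, (f (x - y) - f x + y * f' x) ∂φ₁
      = ∫ y in Set.Ioi (0 : ℝ), (f' x - f' (x - y)) * (y ^ (-α) * θ (Real.log y))) ∧
    (∫ y, (f (x - y) - f x + y * f' x) ∂φ₁
      = ∫ y in Set.Ioi (0 : ℝ), f'' (x - y) * (y ^ (1 - α) * γ (Real.log y))) := by
  obtain ⟨hα1, hα2⟩ := hα
  obtain ⟨hθpos, hper, hgrow⟩ := hθ
  obtain ⟨Mθ, hMθ, hMθle⟩ := theta_bdd hc (by linarith) hθpos hper hgrow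
  have hf'c : Continuous f' := Differentiable.continuous (fun u => (hder2 u).differentiableAt)
  have hf''c : Continuous f'' := hf''.1
  obtain ⟨B1, hB1, hB1le⟩ := c0_bounded hf'c hf'.2.1
  obtain ⟨B2, hB2, hB2le⟩ := c0_bounded hf''c hf''.2.1
  -- the tail weight
  have hwanti : Antitone (fun t : ℝ => φ₁ (Set.Ioi t)) :=
    fun a b hab => measure_mono (Set.Ioi_subset_Ioi hab)
  have hwmeas : Measurable (fun t : ℝ => (φ₁ (Set.Ioi t)).toReal) :=
    hwanti.measurable.ennreal_toReal
  have hφfin : ∀ t : ℝ, 0 < t → φ₁ (Set.Ioi t) ≠ ∞ := fun t ht => by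
    rw [hφ t ht]; exact ENNReal.ofReal_ne_top
  have hg₀eq : ∀ t : ℝ, 0 < t → (φ₁ (Set.Ioi t)).toReal = t ^ (-α) * θ (Real.log t) := by
    intro t ht
    rw [hφ t ht, ENNReal.toReal_ofReal (mul_nonneg (Real.rpow_nonneg ht.le _) (hθpos _).le)]
  have hg₀bd : ∀ t : ℝ, 0 < t → (φ₁ (Set.Ioi t)).toReal ≤ Mθ * t ^ (-α) := by
    intro t ht
    rw [hg₀eq t ht, mul_comm Mθ]
    exact mul_le_mul_of_nonneg_left (hMθle _) (Real.rpow_nonneg ht.le _)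
  haveI hsf : SigmaFinite φ₁ := by
    refine ⟨⟨⟨fun n => Set.Iic 0 ∪ Set.Ioi ((n : ℝ) + 1)⁻¹, fun _ => trivial, fun n => ?_, ?_⟩⟩⟩
    · refine lt_of_le_of_lt (measure_union_le _ _) ?_
      rw [hφ0, hφ _ (by positivity), zero_add]
      exact ENNReal.ofReal_lt_top
    · apply Set.eq_univ_of_forall
      intro z
      rcases le_or_gt z 0 with hz | hz
      · exact Set.mem_iUnion.mpr ⟨0, Set.mem_union_left _ hz⟩
      · obtain ⟨n, hn⟩ := exists_nat_gt z⁻¹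
        refine Set.mem_iUnion.mpr ⟨n, Set.mem_union_right _ (Set.mem_Ioi.mpr ?_)⟩
        have h1 : z⁻¹ < (n : ℝ) + 1 := hn.trans (lt_add_one _)
        have h2 : (0 : ℝ) < (n : ℝ) + 1 := by positivity
        rw [← inv_inv z]
        exact inv_strictAnti₀ (by positivity) h1
  -- fundamental theorem of calculus pieces
  have FTCgen : ∀ F F' : ℝ → ℝ, (∀ u, HasDerivAt F (F' u) u) → Continuous F' → ∀ y : ℝ,
      (∫ t in (0:ℝ)..y, F' (x - t)) = F x - F (x - y) := by
    intro F F' hd hc' y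
    have hderiv : ∀ t ∈ Set.uIcc (0:ℝ) y, HasDerivAt (fun t => -F (x - t)) (F' (x - t)) t := by
      intro t _
      have h2 := ((hd (x - t)).comp t ((hasDerivAt_id t).const_sub x)).neg
      exact (show HasDerivAt (fun t => -F (x - t)) (-(F' (x - t) * -1)) t from h2).congr_deriv (by ring)
    rw [intervalIntegral.integral_eq_sub_of_hasDerivAt hderiv
      ((hc'.comp (continuous_const.sub continuous_id)).intervalIntegrable 0 y)]
    rw [sub_zero]
    ring
  have FTC1 : ∀ y : ℝ, 0 < y →
      (∫ t in Set.Ioo 0 y, (f' x - f' (x - t))) = f (x - y) - f x + y * f' x := by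
    intro y hy
    have hii : IntervalIntegrable (fun t : ℝ => f' (x - t)) volume 0 y :=
      (hf'c.comp (continuous_const.sub continuous_id)).intervalIntegrable 0 y
    rw [← integral_Ioc_eq_integral_Ioo, ← intervalIntegral.integral_of_le hy.le,
      intervalIntegral.integral_sub intervalIntegrable_const hii,
      FTCgen f f' hder1 hf'c y, intervalIntegral.integral_const]
    rw [sub_zero, smul_eq_mul]
    ring
  have FTC2 : ∀ y : ℝ, 0 < y →
      (∫ s in Set.Ioo 0 y, f'' (x - s)) = f' x - f' (x - y) := by
    intro y hy
    rw [← integral_Ioc_eq_integral_Ioo, ← intervalIntegral.integral_of_le hy.le,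
      FTCgen f' f'' hder2 hf''c y]
  -- mean value theorem bound
  have hMVT : ∀ t : ℝ, 0 ≤ t → |f' x - f' (x - t)| ≤ B2 * t := by
    intro t ht
    have hmv := Convex.norm_image_sub_le_of_norm_hasDerivWithin_le
      (f := f') (f' := f'') (s := Set.univ)
      (fun u _ => (hder2 u).hasDerivWithinAt)
      (fun u _ => by simpa [Real.norm_eq_abs] using hB2le u)
      convex_univ (Set.mem_univ (x - t)) (Set.mem_univ x)
    rw [Real.norm_eq_abs, Real.norm_eq_abs] at hmv
    have hxx : x - (x - t) = t := by ring
    rw [hxx, abs_of_nonneg ht] at hmv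
    exact hmv
  -- basic integrability of power functions
  have int_r1 : IntegrableOn (fun t : ℝ => t ^ (1 - α)) (Set.Ioc (0:ℝ) 1) volume := by
    have h := intervalIntegral.intervalIntegrable_rpow' (a := 0) (b := 1) (r := 1 - α)
      (by linarith)
    exact (intervalIntegrable_iff_integrableOn_Ioc_of_le zero_le_one).mp h
  have int_r2 : IntegrableOn (fun t : ℝ => t ^ (-α)) (Set.Ioi (1:ℝ)) volume :=
    integrableOn_Ioi_rpow_of_lt (by linarith) one_pos
  have fin_of_int : ∀ (s : Set ℝ) (v : ℝ → ℝ), IntegrableOn v s volume →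
      (∫⁻ t in s, ENNReal.ofReal (v t)) ≠ ∞ := by
    intro s v hv
    refine ne_of_lt (lt_of_le_of_lt (lintegral_mono fun t => Real.ofReal_le_enorm (v t)) ?_)
    exact hv.2
  have hcont1 : Continuous (fun t : ℝ => f' x - f' (x - t)) :=
    continuous_const.sub (hf'c.comp (continuous_const.sub continuous_id))
  -- finiteness for the first application
  have hfin1 : (∫⁻ t in Set.Ioi (0:ℝ), ENNReal.ofReal |f' x - f' (x - t)| * φ₁ (Set.Ioi t)) ≠ ∞ := by
    have hcong : (∫⁻ t in Set.Ioi (0:ℝ), ENNReal.ofReal |f' x - f' (x - t)| * φ₁ (Set.Ioi t))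
        = ∫⁻ t in Set.Ioi (0:ℝ),
            ENNReal.ofReal (|f' x - f' (x - t)| * (φ₁ (Set.Ioi t)).toReal) := by
      apply setLIntegral_congr_fun measurableSet_Ioi ?_
      intro t ht
      beta_reduce
      rw [ENNReal.ofReal_mul (abs_nonneg _), ENNReal.ofReal_toReal (hφfin t ht)]
    rw [hcong, ← Set.Ioc_union_Ioi_eq_Ioi (zero_le_one (α := ℝ)),
      lintegral_union measurableSet_Ioi (Set.Ioc_disjoint_Ioi le_rfl)]
    apply ENNReal.add_ne_top.mpr
    constructor
    · refine ne_top_of_le_ne_top (fin_of_int _ _ (int_r1.const_mul (B2 * Mθ)))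
        (setLIntegral_mono' measurableSet_Ioc fun t ht => ENNReal.ofReal_le_ofReal ?_)
      calc |f' x - f' (x - t)| * (φ₁ (Set.Ioi t)).toReal
          ≤ (B2 * t) * (Mθ * t ^ (-α)) :=
            mul_le_mul (hMVT t ht.1.le) (hg₀bd t ht.1) ENNReal.toReal_nonneg
              (mul_nonneg hB2 ht.1.le)
        _ = B2 * Mθ * t ^ (1 - α) := by
            rw [show (1:ℝ) - α = 1 + (-α) by ring, Real.rpow_add ht.1, Real.rpow_one]
            ring
    · refine ne_top_of_le_ne_top (fin_of_int _ _ (int_r2.const_mul (2 * B1 * Mθ)))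
        (setLIntegral_mono' measurableSet_Ioi fun t ht => ENNReal.ofReal_le_ofReal ?_)
      have ht0 : (0:ℝ) < t := lt_trans one_pos ht
      have h2B : |f' x - f' (x - t)| ≤ 2 * B1 := by
        have habs := abs_add_le (f' x) (-f' (x - t))
        rw [abs_neg] at habs
        calc |f' x - f' (x - t)| = |f' x + -f' (x - t)| := by rw [sub_eq_add_neg]
          _ ≤ |f' x| + |f' (x - t)| := habs
          _ ≤ B1 + B1 := add_le_add (hB1le x) (hB1le (x - t))
          _ = 2 * B1 := by ring
      calc |f' x - f' (x - t)| * (φ₁ (Set.Ioi t)).toReal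
          ≤ (2 * B1) * (Mθ * t ^ (-α)) :=
            mul_le_mul h2B (hg₀bd t ht0) ENNReal.toReal_nonneg (by positivity)
        _ = 2 * B1 * Mθ * t ^ (-α) := by ring
  obtain ⟨bint1, bval1⟩ := bswap φ₁ (fun t => f' x - f' (x - t)) hcont1 hfin1 hφfin
  have hae1 : ∀ᵐ y ∂φ₁, y ∈ Set.Ioi (0:ℝ) := by
    rw [ae_iff]
    have hset : {y : ℝ | ¬ y ∈ Set.Ioi (0:ℝ)} = Set.Iic 0 := by ext y; simp [not_lt]
    rw [hset]; exact hφ0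
  have hae1' : ∀ᵐ y ∂φ₁,
      (∫ t in Set.Ioo 0 y, (f' x - f' (x - t))) = f (x - y) - f x + y * f' x := by
    filter_upwards [hae1] with y hy using FTC1 y hy
  have out1 : Integrable (fun y => f (x - y) - f x + y * f' x) φ₁ := bint1.congr hae1'
  have hval1 : ∫ y, (f (x - y) - f x + y * f' x) ∂φ₁
      = ∫ t in Set.Ioi (0:ℝ), (f' x - f' (x - t)) * (φ₁ (Set.Ioi t)).toReal :=
    (integral_congr_ae hae1').symm.trans bval1
  have int2 : IntegrableOn (fun t => (f' x - f' (x - t)) * (φ₁ (Set.Ioi t)).toReal)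
      (Set.Ioi 0) volume := by
    refine ⟨(hcont1.measurable.mul hwmeas).aestronglyMeasurable, ?_⟩
    rw [hasFiniteIntegral_iff_norm]
    have hcg : (∫⁻ t in Set.Ioi (0:ℝ),
          ENNReal.ofReal ‖(f' x - f' (x - t)) * (φ₁ (Set.Ioi t)).toReal‖)
        = ∫⁻ t in Set.Ioi (0:ℝ), ENNReal.ofReal |f' x - f' (x - t)| * φ₁ (Set.Ioi t) := by
      apply setLIntegral_congr_fun measurableSet_Ioi ?_
      intro t ht
      beta_reduce
      rw [Real.norm_eq_abs, abs_mul, abs_of_nonneg ENNReal.toReal_nonneg,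
        ENNReal.ofReal_mul (abs_nonneg _), ENNReal.ofReal_toReal (hφfin t ht)]
    rw [hcg]
    exact hfin1.lt_top
  have out2 : IntegrableOn (fun y => (f' x - f' (x - y)) * (y ^ (-α) * θ (Real.log y)))
      (Set.Ioi 0) volume := by
    apply int2.congr_fun ?_ measurableSet_Ioi
    intro y hy
    simp only
    rw [hg₀eq y hy]
  have out4 : ∫ y, (f (x - y) - f x + y * f' x) ∂φ₁
      = ∫ y in Set.Ioi (0:ℝ), (f' x - f' (x - y)) * (y ^ (-α) * θ (Real.log y)) := by
    rw [hval1]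
    apply setIntegral_congr_fun measurableSet_Ioi
    intro y hy
    simp only
    rw [hg₀eq y hy]
  -- second measure
  set ν : Measure ℝ := (volume.restrict (Set.Ioi (0:ℝ))).withDensity
      (fun t => ENNReal.ofReal ((φ₁ (Set.Ioi t)).toReal)) with hνdef
  haveI hνsf : SFinite ν := by rw [hνdef]; infer_instance
  have hν_Ioi : ∀ s : ℝ, 0 < s → ν (Set.Ioi s)
      = ∫⁻ t in Set.Ioi s, ENNReal.ofReal ((φ₁ (Set.Ioi t)).toReal) := by
    intro s hs
    rw [hνdef, withDensity_apply _ measurableSet_Ioi, Measure.restrict_restrict measurableSet_Ioi,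
      Set.inter_eq_left.mpr (Set.Ioi_subset_Ioi hs.le)]
  have hg₀int : ∀ s : ℝ, 0 < s →
      IntegrableOn (fun t => (φ₁ (Set.Ioi t)).toReal) (Set.Ioi s) volume := by
    intro s hs
    refine Integrable.mono
      ((integrableOn_Ioi_rpow_of_lt (show -α < -1 by linarith) hs).const_mul Mθ)
      hwmeas.aestronglyMeasurable ?_
    rw [ae_restrict_iff' measurableSet_Ioi]
    apply ae_of_all
    intro t ht
    have ht0 : (0:ℝ) < t := lt_trans hs ht
    rw [Real.norm_eq_abs, abs_of_nonneg ENNReal.toReal_nonneg, Real.norm_eq_abs]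
    exact le_trans (hg₀bd t ht0) (le_abs_self _)
  have hν_eq : ∀ s : ℝ, 0 < s → ν (Set.Ioi s)
      = ENNReal.ofReal (∫ t in Set.Ioi s, (φ₁ (Set.Ioi t)).toReal) := by
    intro s hs
    rw [hν_Ioi s hs, ← ofReal_integral_eq_lintegral_ofReal (hg₀int s hs)
      (ae_of_all _ fun t => ENNReal.toReal_nonneg)]
  have hνfin : ∀ s : ℝ, 0 < s → ν (Set.Ioi s) ≠ ∞ := fun s hs => by
    rw [hν_eq s hs]; exact ENNReal.ofReal_ne_top
  have hGeq : ∀ s : ℝ, 0 < s → (ν (Set.Ioi s)).toReal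
      = ∫ t in Set.Ioi s, (φ₁ (Set.Ioi t)).toReal := by
    intro s hs
    rw [hν_eq s hs, ENNReal.toReal_ofReal
      (setIntegral_nonneg measurableSet_Ioi fun t _ => ENNReal.toReal_nonneg)]
  have hGbd : ∀ s : ℝ, 0 < s → (ν (Set.Ioi s)).toReal ≤ Mθ / (α - 1) * s ^ (1 - α) := by
    intro s hs
    rw [hGeq s hs]
    have h2 : (-s ^ ((1:ℝ) - α)) / (1 - α) = s ^ ((1:ℝ) - α) / (α - 1) := by
      rw [div_eq_div_iff (by linarith) (by linarith)]
      ring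
    calc ∫ t in Set.Ioi s, (φ₁ (Set.Ioi t)).toReal
        ≤ ∫ t in Set.Ioi s, Mθ * t ^ (-α) := by
          apply setIntegral_mono_on (hg₀int s hs)
            ((integrableOn_Ioi_rpow_of_lt (show -α < -1 by linarith) hs).const_mul Mθ)
            measurableSet_Ioi
          intro t ht
          exact hg₀bd t (lt_trans hs ht)
      _ = Mθ * ∫ t in Set.Ioi s, t ^ (-α) := integral_const_mul Mθ _
      _ = Mθ * (-s ^ (-α + 1) / (-α + 1)) := by rw [integral_Ioi_rpow_of_lt (by linarith) hs]
      _ = Mθ / (α - 1) * s ^ (1 - α) := by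
          rw [show -α + 1 = (1:ℝ) - α by ring, h2]
          ring
  have hGanti : ∀ s : ℝ, 1 ≤ s → (ν (Set.Ioi s)).toReal ≤ (ν (Set.Ioi 1)).toReal := by
    intro s hs
    rw [hGeq 1 one_pos, hGeq s (lt_of_lt_of_le one_pos hs)]
    apply setIntegral_mono_set (hg₀int 1 one_pos)
      (ae_of_all _ fun t => ENNReal.toReal_nonneg)
    exact HasSubset.Subset.eventuallyLE (Set.Ioi_subset_Ioi hs)
  have hk_cont : Continuous (fun s : ℝ => f'' (x - s)) :=
    hf''c.comp (continuous_const.sub continuous_id)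
  have hk_int : Integrable (fun s : ℝ => f'' (x - s)) volume :=
    (integrable_comp_sub_left f'' x).mpr hf''.2.2
  have hfin2 : (∫⁻ s in Set.Ioi (0:ℝ), ENNReal.ofReal |f'' (x - s)| * ν (Set.Ioi s)) ≠ ∞ := by
    have hcong : (∫⁻ s in Set.Ioi (0:ℝ), ENNReal.ofReal |f'' (x - s)| * ν (Set.Ioi s))
        = ∫⁻ s in Set.Ioi (0:ℝ), ENNReal.ofReal (|f'' (x - s)| * (ν (Set.Ioi s)).toReal) := by
      apply setLIntegral_congr_fun measurableSet_Ioi ?_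
      intro s hs
      beta_reduce
      rw [ENNReal.ofReal_mul (abs_nonneg _), ENNReal.ofReal_toReal (hνfin s hs)]
    rw [hcong, ← Set.Ioc_union_Ioi_eq_Ioi (zero_le_one (α := ℝ)),
      lintegral_union measurableSet_Ioi (Set.Ioc_disjoint_Ioi le_rfl)]
    apply ENNReal.add_ne_top.mpr
    constructor
    · refine ne_top_of_le_ne_top (fin_of_int _ _ (int_r1.const_mul (B2 * (Mθ / (α - 1)))))
        (setLIntegral_mono' measurableSet_Ioc fun s hs => ENNReal.ofReal_le_ofReal ?_)
      calc |f'' (x - s)| * (ν (Set.Ioi s)).toReal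
          ≤ B2 * (Mθ / (α - 1) * s ^ (1 - α)) :=
            mul_le_mul (hB2le _) (hGbd s hs.1) ENNReal.toReal_nonneg hB2
        _ = B2 * (Mθ / (α - 1)) * s ^ (1 - α) := by ring
    · refine ne_top_of_le_ne_top
        (fin_of_int _ _ ((hk_int.abs.integrableOn).const_mul ((ν (Set.Ioi 1)).toReal)))
        (setLIntegral_mono' measurableSet_Ioi fun s hs => ENNReal.ofReal_le_ofReal ?_)
      calc |f'' (x - s)| * (ν (Set.Ioi s)).toReal
          ≤ |f'' (x - s)| * (ν (Set.Ioi 1)).toReal :=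
            mul_le_mul_of_nonneg_left (hGanti s (le_of_lt hs)) (abs_nonneg _)
        _ = (ν (Set.Ioi 1)).toReal * |f'' (x - s)| := by ring
  obtain ⟨bint2, bval2⟩ := bswap ν (fun s => f'' (x - s)) hk_cont hfin2 hνfin
  have hν0 : ν (Set.Iic 0) = 0 := by
    rw [hνdef, withDensity_apply _ measurableSet_Iic,
      Measure.restrict_restrict measurableSet_Iic,
      Set.disjoint_iff_inter_eq_empty.mp (Set.Iic_disjoint_Ioi le_rfl)]
    simp
  have haeν : ∀ᵐ y ∂ν, y ∈ Set.Ioi (0:ℝ) := by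
    rw [ae_iff]
    have hset : {y : ℝ | ¬ y ∈ Set.Ioi (0:ℝ)} = Set.Iic 0 := by ext y; simp [not_lt]
    rw [hset]; exact hν0
  have haeν' : ∀ᵐ y ∂ν, (∫ s in Set.Ioo 0 y, f'' (x - s)) = f' x - f' (x - y) := by
    filter_upwards [haeν] with y hy using FTC2 y hy
  have hν_int_eq : ∫ y, (f' x - f' (x - y)) ∂ν
      = ∫ y in Set.Ioi (0:ℝ), (f' x - f' (x - y)) * (φ₁ (Set.Ioi y)).toReal := by
    rw [hνdef]
    rw [show (fun t => ENNReal.ofReal ((φ₁ (Set.Ioi t)).toReal))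
        = (fun t => ((Real.toNNReal ((φ₁ (Set.Ioi t)).toReal) : ℝ≥0) : ℝ≥0∞)) from rfl]
    rw [integral_withDensity_eq_integral_smul hwmeas.real_toNNReal _]
    apply setIntegral_congr_fun measurableSet_Ioi
    intro y _
    simp only [NNReal.smul_def, smul_eq_mul]
    rw [Real.coe_toNNReal _ ENNReal.toReal_nonneg]
    ring
  have hγid : ∀ y : ℝ, 0 < y →
      y ^ (1 - α) * γ (Real.log y) = (ν (Set.Ioi y)).toReal := by
    intro y hy
    rw [hγ (Real.log y), Real.exp_log hy]
    have h1 : (∫ t in Set.Ioi y, t ^ (-α) * θ (Real.log t))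
        = ∫ t in Set.Ioi y, (φ₁ (Set.Ioi t)).toReal :=
      setIntegral_congr_fun measurableSet_Ioi (fun t ht => (hg₀eq t (lt_trans hy ht)).symm)
    rw [h1, ← hGeq y hy,
      show Real.exp ((α - 1) * Real.log y) = y ^ (α - 1) by
        rw [Real.rpow_def_of_pos hy, mul_comm],
      ← mul_assoc, ← Real.rpow_add hy, show (1:ℝ) - α + (α - 1) = 0 by ring,
      Real.rpow_zero, one_mul]
  have hGanti' : Antitone (fun s : ℝ => ν (Set.Ioi s)) :=
    fun a b hab => measure_mono (Set.Ioi_subset_Ioi hab)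
  have hGmeas : Measurable (fun s : ℝ => (ν (Set.Ioi s)).toReal) :=
    hGanti'.measurable.ennreal_toReal
  have int3 : IntegrableOn (fun s => f'' (x - s) * (ν (Set.Ioi s)).toReal)
      (Set.Ioi 0) volume := by
    refine ⟨(hk_cont.measurable.mul hGmeas).aestronglyMeasurable, ?_⟩
    rw [hasFiniteIntegral_iff_norm]
    have hcg : (∫⁻ s in Set.Ioi (0:ℝ),
          ENNReal.ofReal ‖f'' (x - s) * (ν (Set.Ioi s)).toReal‖)
        = ∫⁻ s in Set.Ioi (0:ℝ), ENNReal.ofReal |f'' (x - s)| * ν (Set.Ioi s) := by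
      apply setLIntegral_congr_fun measurableSet_Ioi ?_
      intro s hs
      beta_reduce
      rw [Real.norm_eq_abs, abs_mul, abs_of_nonneg ENNReal.toReal_nonneg,
        ENNReal.ofReal_mul (abs_nonneg _), ENNReal.ofReal_toReal (hνfin s hs)]
    rw [hcg]
    exact hfin2.lt_top
  have out3 : IntegrableOn (fun y => f'' (x - y) * (y ^ (1 - α) * γ (Real.log y)))
      (Set.Ioi 0) volume := by
    apply int3.congr_fun ?_ measurableSet_Ioi
    intro y hy
    simp only
    rw [hγid y hy]
  have out5 : ∫ y, (f (x - y) - f x + y * f' x) ∂φ₁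
      = ∫ y in Set.Ioi (0:ℝ), f'' (x - y) * (y ^ (1 - α) * γ (Real.log y)) := by
    calc ∫ y, (f (x - y) - f x + y * f' x) ∂φ₁
        = ∫ t in Set.Ioi (0:ℝ), (f' x - f' (x - t)) * (φ₁ (Set.Ioi t)).toReal := hval1
      _ = ∫ y, (f' x - f' (x - y)) ∂ν := hν_int_eq.symm
      _ = ∫ y, (∫ s in Set.Ioo 0 y, f'' (x - s)) ∂ν := (integral_congr_ae haeν').symm
      _ = ∫ s in Set.Ioi (0:ℝ), f'' (x - s) * (ν (Set.Ioi s)).toReal := bval2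
      _ = ∫ y in Set.Ioi (0:ℝ), f'' (x - y) * (y ^ (1 - α) * γ (Real.log y)) := by
          apply setIntegral_congr_fun measurableSet_Ioi
          intro y hy
          simp only
          rw [hγid y hy]
  exact ⟨out1, out2, out3, out4, out5⟩
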